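/- arXiv:1806.09517 — 2 statements merged into one kernel-verified Lean document; each statement's English description precedes it below -/
import Mathlib

section
/- Let (X_z)_{z ∈ ℝ} be a real-valued stochastic process such that P(X_{z₁} ≤ X_{z₂}) = 1 whenever z₁ ≤ z₂. Then there exists a modification (X̃_z) of X such that every sample path z ↦ X̃_z(ω) is nondecreasing on ℝ, constructed by setting X̃_z(ω) = lim_{q ↓ z, q ∈ ℚ} X_q(ω) on the exceptional null set. -/
open MeasureTheory Set

theorem stmt9 {Ω : Type*} [MeasurableSpace Ω] (P : Measure Ω) [IsProbabilityMeasure P]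
    (X : ℝ → Ω → ℝ)
    (hmono : ∀ z₁ z₂ : ℝ, z₁ ≤ z₂ → ∀ᵐ ω ∂P, X z₁ ω ≤ X z₂ ω) :
    ∃ Xt : ℝ → Ω → ℝ, (∀ z : ℝ, ∀ᵐ ω ∂P, X z ω = Xt z ω) ∧
      ∀ ω : Ω, Monotone fun z => Xt z ω := by
  classical
  set A : Set Ω := {ω | ∀ q r : ℚ, q ≤ r → X q ω ≤ X r ω} with hA
  set G : ℝ → Set Ω := fun z => {ω | ∀ q : ℚ,
      (z ≤ (q : ℝ) → X z ω ≤ X q ω) ∧ ((q : ℝ) ≤ z → X q ω ≤ X z ω)} with hGdef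
  set S : ℝ → Ω → Set ℝ := fun z ω => (fun q : ℚ => X q ω) '' {q : ℚ | z < (q : ℝ)} with hSdef
  set f : ℝ → Ω → ℝ := fun z ω => sInf (S z ω) with hfdef
  refine ⟨fun z ω => if ω ∈ A ∧ ω ∈ G z then X z ω else if ω ∈ A then f z ω else 0, ?_, ?_⟩
  · intro z
    have hAae : ∀ᵐ ω ∂P, ω ∈ A := by
      rw [hA]
      simp only [Set.mem_setOf_eq]
      rw [MeasureTheory.ae_all_iff]
      intro q
      rw [MeasureTheory.ae_all_iff]
      intro r
      by_cases h : q ≤ r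
      · filter_upwards [hmono q r (by exact_mod_cast h)] with ω hω _ using hω
      · filter_upwards with ω hqr using absurd hqr h
    have h1 : ∀ᵐ ω ∂P, ∀ q : ℚ, z ≤ (q : ℝ) → X z ω ≤ X q ω := by
      rw [MeasureTheory.ae_all_iff]
      intro q
      by_cases h : z ≤ (q : ℝ)
      · filter_upwards [hmono z q h] with ω hω _ using hω
      · filter_upwards with ω hq using absurd hq h
    have h2 : ∀ᵐ ω ∂P, ∀ q : ℚ, (q : ℝ) ≤ z → X q ω ≤ X z ω := by
      rw [MeasureTheory.ae_all_iff]
      intro q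
      by_cases h : (q : ℝ) ≤ z
      · filter_upwards [hmono q z h] with ω hω _ using hω
      · filter_upwards with ω hq using absurd hq h
    filter_upwards [hAae, h1, h2] with ω hωA hω1 hω2
    have hωG : ω ∈ G z := fun q => ⟨hω1 q, hω2 q⟩
    simp [hωA, hωG]
  · intro ω
    intro z₁ z₂ h12
    by_cases hωA : ω ∈ A
    · have hne : ∀ z : ℝ, (S z ω).Nonempty := by
        intro z
        obtain ⟨q, hq⟩ := exists_rat_gt z
        exact ⟨X q ω, ⟨q, hq, rfl⟩⟩
      have hbdd : ∀ z : ℝ, BddBelow (S z ω) := by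
        intro z
        obtain ⟨r, hr⟩ := exists_rat_lt z
        refine ⟨X r ω, ?_⟩
        rintro x ⟨q, hq, rfl⟩
        exact hωA r q (by exact_mod_cast (hr.trans hq).le)
      rcases eq_or_lt_of_le h12 with rfl | hlt
      · simp
      · by_cases hG1 : ω ∈ G z₁ <;> by_cases hG2 : ω ∈ G z₂
        · simp only [hωA, hG1, hG2, and_self, if_true]
          obtain ⟨q, hq1, hq2⟩ := exists_rat_btwn hlt
          exact le_trans ((hG1 q).1 hq1.le) ((hG2 q).2 hq2.le)
        · simp only [hωA, hG1, hG2, and_true, and_false, if_true, if_false]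
          refine le_csInf (hne z₂) ?_
          rintro x ⟨q, hq, rfl⟩
          exact (hG1 q).1 (h12.trans hq.le)
        · simp only [hωA, hG1, hG2, and_true, and_false, if_true, if_false]
          obtain ⟨q, hq1, hq2⟩ := exists_rat_btwn hlt
          exact le_trans (csInf_le (hbdd z₁) ⟨q, hq1, rfl⟩) ((hG2 q).2 hq2.le)
        · simp only [hωA, hG1, hG2, and_true, and_false, if_true, if_false]
          refine csInf_le_csInf (hbdd z₁) (hne z₂) ?_
          rintro x ⟨q, hq, rfl⟩
          exact ⟨q, hlt.trans hq, rfl⟩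
    · simp [hωA]
end

section
/- Let P_{X|Z=0} and P_{X|Z=1} be Borel probability measures on ℝ whose supports 𝒳₀ and 𝒳₁ satisfy d_H(𝒳₀, 𝒳₁) > K for some K > 0, where d_H is the Hausdorff distance. Then there is no family of functions g(z,·): [0,1] → ℝ for z ∈ [0,1], jointly measurable, with u ↦ g(z,u) pushing Lebesgue measure to P_{X|Z=z} for z ∈ {0,1}, such that z ↦ g(z,u) is continuous on [0,1] for almost every u and satisfies |g(z₁,u) − g(z₂,u)| ≤ C|z₁−z₂|^r uniformly with fixed finite C and r > 0; i.e., such a uniformly Hölder-in-z generator cannot exist. -/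
open MeasureTheory Set

theorem stmt14 (μ₀ μ₁ : Measure ℝ) [IsProbabilityMeasure μ₀] [IsProbabilityMeasure μ₁]
    (S₀ S₁ : Set ℝ) (hS₀c : IsClosed S₀) (hS₁c : IsClosed S₁)
    (hS₀ : μ₀ S₀ᶜ = 0) (hS₁ : μ₁ S₁ᶜ = 0)
    (hS₀min : ∀ F : Set ℝ, IsClosed F → μ₀ Fᶜ = 0 → S₀ ⊆ F)
    (hS₁min : ∀ F : Set ℝ, IsClosed F → μ₁ Fᶜ = 0 → S₁ ⊆ F)
    (K : ℝ) (hK : 0 < K) (hH : K < Metric.hausdorffDist S₀ S₁) :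
    ¬ ∃ (g : ℝ → ℝ → ℝ) (C r : ℝ), Measurable (Function.uncurry g) ∧
      Measure.map (g 0) (volume.restrict (Icc (0:ℝ) 1)) = μ₀ ∧
      Measure.map (g 1) (volume.restrict (Icc (0:ℝ) 1)) = μ₁ ∧
      0 < r ∧ C < K ∧
      (∀ᵐ u ∂(volume.restrict (Icc (0:ℝ) 1)), Continuous fun z => g z u) ∧
      (∀ z₁ z₂ : ℝ, ∀ᵐ u ∂(volume.restrict (Icc (0:ℝ) 1)),
        |g z₁ u - g z₂ u| ≤ C * |z₁ - z₂| ^ r) := by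
  rintro ⟨g, C, r, hmeas, hmap0, hmap1, hr, hCK, hcont, hHold⟩
  set ν := volume.restrict (Icc (0:ℝ) 1) with hν
  haveI : NeZero ν := ⟨by
    simp only [hν, ne_eq, Measure.restrict_eq_zero, Real.volume_Icc]
    norm_num⟩
  have hg0 : Measurable (g 0) := by
    have : (g 0) = fun u => Function.uncurry g (0, u) := rfl
    rw [this]; exact hmeas.comp (measurable_const.prodMk measurable_id)
  have hg1 : Measurable (g 1) := by
    have : (g 1) = fun u => Function.uncurry g (1, u) := rfl
    rw [this]; exact hmeas.comp (measurable_const.prodMk measurable_id)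
  -- a.e. membership in supports
  have hmem0 : ∀ᵐ u ∂ν, g 0 u ∈ S₀ := by
    have : ν (g 0 ⁻¹' S₀ᶜ) = 0 := by
      rw [← Measure.map_apply hg0 hS₀c.measurableSet.compl, hmap0]; exact hS₀
    exact this
  have hmem1 : ∀ᵐ u ∂ν, g 1 u ∈ S₁ := by
    have : ν (g 1 ⁻¹' S₁ᶜ) = 0 := by
      rw [← Measure.map_apply hg1 hS₁c.measurableSet.compl, hmap1]; exact hS₁
    exact this
  have hHold01 : ∀ᵐ u ∂ν, |g 0 u - g 1 u| ≤ C := by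
    filter_upwards [hHold 0 1] with u hu
    have : |(0:ℝ) - 1| ^ r = 1 := by
      norm_num
    rw [this, mul_one] at hu
    exact hu
  -- C ≥ 0
  have hC0 : 0 ≤ C := by
    obtain ⟨u, hu⟩ := hHold01.exists
    exact le_trans (abs_nonneg _) hu
  -- nonempty supports
  have hS₀ne : S₀.Nonempty := by
    obtain ⟨u, hu⟩ := hmem0.exists
    exact ⟨_, hu⟩
  have hS₁ne : S₁.Nonempty := by
    obtain ⟨u, hu⟩ := hmem1.exists
    exact ⟨_, hu⟩
  -- S₀ ⊆ {x | infDist x S₁ ≤ C}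
  have key : ∀ x ∈ S₀, Metric.infDist x S₁ ≤ C := by
    have hFclosed : IsClosed {x : ℝ | Metric.infDist x S₁ ≤ C} :=
      isClosed_le (Metric.continuous_infDist_pt S₁) continuous_const
    have hae : ∀ᵐ u ∂ν, g 0 u ∈ {x : ℝ | Metric.infDist x S₁ ≤ C} := by
      filter_upwards [hmem1, hHold01] with u h1 h01
      exact le_trans (Metric.infDist_le_dist_of_mem h1) (by rwa [Real.dist_eq])
    have h0 : μ₀ {x : ℝ | Metric.infDist x S₁ ≤ C}ᶜ = 0 := by
      rw [← hmap0, Measure.map_apply hg0 hFclosed.measurableSet.compl]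
      exact hae
    exact fun x hx => hS₀min _ hFclosed h0 hx
  have key' : ∀ x ∈ S₁, Metric.infDist x S₀ ≤ C := by
    have hFclosed : IsClosed {x : ℝ | Metric.infDist x S₀ ≤ C} :=
      isClosed_le (Metric.continuous_infDist_pt S₀) continuous_const
    have hae : ∀ᵐ u ∂ν, g 1 u ∈ {x : ℝ | Metric.infDist x S₀ ≤ C} := by
      filter_upwards [hmem0, hHold01] with u h0 h01
      refine le_trans (Metric.infDist_le_dist_of_mem h0) ?_
      rw [Real.dist_eq, abs_sub_comm]
      exact h01
    have h1 : μ₁ {x : ℝ | Metric.infDist x S₀ ≤ C}ᶜ = 0 := by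
      rw [← hmap1, Measure.map_apply hg1 hFclosed.measurableSet.compl]
      exact hae
    exact fun x hx => hS₁min _ hFclosed h1 hx
  have : Metric.hausdorffDist S₀ S₁ ≤ C :=
    Metric.hausdorffDist_le_of_infDist hC0 key key'
  linarith
end
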